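/- arXiv:1409.6880 — 3 statements merged into one kernel-verified Lean document; each statement's English description precedes it below -/
import Mathlib

section
/- Let U be a real m×n matrix and let q be a natural number with rank(U) ≤ q. Then there exist a real symmetric m×m matrix V and a real symmetric n×n matrix W such that rank(V) + rank(W) ≤ 2q and the (m+n)×(m+n) block matrix [[V, U], [Uᵀ, W]] is positive semidefinite. -/
open Matrix

section SqrtCompat
open scoped MatrixOrder

noncomputable def Matrix.PosSemidef.sqrt {k : Type*} [Fintype k] [DecidableEq k]
    {A : Matrix k k ℝ} (_hA : A.PosSemidef) : Matrix k k ℝ := CFC.sqrt A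

lemma Matrix.PosSemidef.posSemidef_sqrt {k : Type*} [Fintype k] [DecidableEq k]
    {A : Matrix k k ℝ} (hA : A.PosSemidef) : hA.sqrt.PosSemidef :=
  (CFC.sqrt_nonneg A).posSemidef

lemma Matrix.PosSemidef.sqrt_mul_self {k : Type*} [Fintype k] [DecidableEq k]
    {A : Matrix k k ℝ} (hA : A.PosSemidef) : hA.sqrt * hA.sqrt = A :=
  CFC.sqrt_mul_sqrt_self A hA.nonneg

lemma Matrix.PosSemidef.eq_sqrt_of_sq_eq {k : Type*} [Fintype k] [DecidableEq k]
    {A B : Matrix k k ℝ} (hA : A.PosSemidef) (hB : B.PosSemidef) (hAB : A ^ 2 = B) :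
    A = hB.sqrt :=
  (CFC.sqrt_unique (by rw [← hAB, sq]) hA.nonneg).symm

end SqrtCompat

private lemma fromBlocks_diag_posSemidef {m n : ℕ}
    {V : Matrix (Fin m) (Fin m) ℝ} {W : Matrix (Fin n) (Fin n) ℝ}
    (hV : V.PosSemidef) (hW : W.PosSemidef) :
    (fromBlocks V 0 0 W).PosSemidef := by
  refine PosSemidef.of_dotProduct_mulVec_nonneg ?_ ?_
  · rw [IsHermitian, fromBlocks_conjTranspose]
    have h1 : Vᴴ = V := hV.1.eq
    have h2 : Wᴴ = W := hW.1.eq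
    rw [conjTranspose_eq_transpose_of_trivial] at h1 h2
    simp [h1, h2]
  · intro x
    rw [fromBlocks_mulVec]
    have hx : x = Sum.elim (x ∘ Sum.inl) (x ∘ Sum.inr) := by
      ext i; cases i <;> rfl
    rw [hx]
    simp only [Sum.elim_comp_inl, Sum.elim_comp_inr]
    rw [star_trivial, sumElim_dotProduct_sumElim]
    simp only [zero_mulVec, add_zero, zero_add]
    have h1 := hV.dotProduct_mulVec_nonneg (x ∘ Sum.inl)
    have h2 := hW.dotProduct_mulVec_nonneg (x ∘ Sum.inr)
    simp only [star_trivial] at h1 h2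
    positivity

private lemma sqrt_sq_add_posSemidef {k : Type*} [Fintype k] [DecidableEq k]
    {H : Matrix k k ℝ}
    (hH : H.IsHermitian) (hH2 : (H ^ 2).PosSemidef) :
    (hH2.sqrt + H).PosSemidef := by
  set u : Matrix k k ℝ := (hH.eigenvectorUnitary : Matrix k k ℝ) with hu
  set lam := hH.eigenvalues with hlam
  have huu : star u * u = 1 := by
    exact Matrix.mem_unitaryGroup_iff'.mp (hH.eigenvectorUnitary).2
  have key : ∀ d e : k → ℝ,
      (u * diagonal d * star u) * (u * diagonal e * star u)
        = u * diagonal (fun i => d i * e i) * star u := by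
    intro d e
    calc (u * diagonal d * star u) * (u * diagonal e * star u)
        = u * diagonal d * (star u * u) * diagonal e * star u := by
          simp only [mul_assoc]
      _ = u * diagonal (fun i => d i * e i) * star u := by
          rw [huu, mul_one, mul_assoc u, diagonal_mul_diagonal]
  have hspec : H = u * diagonal lam * star u := by
    have := hH.spectral_theorem
    simpa [hu, hlam] using this
  set T : Matrix k k ℝ := u * diagonal (fun i => |lam i|) * star u with hT
  have hTpsd : T.PosSemidef := by
    have hd : (diagonal (fun i => |lam i|) : Matrix k k ℝ).PosSemidef :=
      posSemidef_diagonal_iff.mpr fun i => abs_nonneg _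
    have := hd.mul_mul_conjTranspose_same u
    simpa [hT, Matrix.star_eq_conjTranspose] using this
  have hTsq : T ^ 2 = H ^ 2 := by
    have habs : (fun i => |lam i| * |lam i|) = fun i => lam i * lam i :=
      funext fun i => abs_mul_abs_self _
    rw [pow_two, pow_two, hT, key, hspec, key, habs]
  have hTeq : T = hH2.sqrt := hTpsd.eq_sqrt_of_sq_eq hH2 hTsq
  rw [← hTeq, hT, hspec, ← add_mul, ← mul_add, diagonal_add]
  have hd : (diagonal (fun i => |lam i| + lam i) : Matrix k k ℝ).PosSemidef :=
    posSemidef_diagonal_iff.mpr fun i => by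
      have := neg_abs_le (lam i); linarith
  have := hd.mul_mul_conjTranspose_same u
  simpa [Matrix.star_eq_conjTranspose] using this

/-- If `U` is a real `m × n` matrix with `rank U ≤ q`, then there exist real symmetric
matrices `V` (`m × m`) and `W` (`n × n`) with `rank V + rank W ≤ 2q` such that the
block matrix `[[V, U], [Uᵀ, W]]` is positive semidefinite. -/
theorem exists_symm_blocks_of_rank_le
    (m n q : ℕ) (U : Matrix (Fin m) (Fin n) ℝ) (hU : U.rank ≤ q) :
    ∃ (V : Matrix (Fin m) (Fin m) ℝ) (W : Matrix (Fin n) (Fin n) ℝ),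
      V.IsSymm ∧ W.IsSymm ∧ V.rank + W.rank ≤ 2 * q ∧
      (Matrix.fromBlocks V U Uᵀ W).PosSemidef := by
  have hA : (U * Uᵀ).PosSemidef := by
    have := posSemidef_self_mul_conjTranspose U
    simpa using this
  have hB : (Uᵀ * U).PosSemidef := by
    have := posSemidef_conjTranspose_mul_self U
    simpa using this
  refine ⟨hA.sqrt, hB.sqrt, ?_, ?_, ?_, ?_⟩
  · have := hA.posSemidef_sqrt.1
    rw [IsHermitian] at this
    rw [Matrix.IsSymm]
    simpa using this
  · have := hB.posSemidef_sqrt.1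
    rw [IsHermitian] at this
    rw [Matrix.IsSymm]
    simpa using this
  · have hVt : hA.sqrt.rank = U.rank := by
      have h1 : hA.sqrtᵀ = hA.sqrt := by
        have := hA.posSemidef_sqrt.1; rw [IsHermitian] at this; simpa using this
      have h2 := rank_self_mul_transpose hA.sqrt
      rw [h1, hA.sqrt_mul_self] at h2
      rw [← h2, rank_self_mul_transpose]
    have hWt : hB.sqrt.rank = U.rank := by
      have h1 : hB.sqrtᵀ = hB.sqrt := by
        have := hB.posSemidef_sqrt.1; rw [IsHermitian] at this; simpa using this
      have h2 := rank_self_mul_transpose hB.sqrt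
      rw [h1, hB.sqrt_mul_self] at h2
      rw [← h2, rank_transpose_mul_self]
    rw [hVt, hWt]; omega
  · set H : Matrix (Fin m ⊕ Fin n) (Fin m ⊕ Fin n) ℝ := fromBlocks 0 U Uᵀ 0 with hHdef
    have hH : H.IsHermitian := by
      rw [IsHermitian, hHdef, fromBlocks_conjTranspose]
      simp
    have hH2 : (H ^ 2).PosSemidef := by
      rw [pow_two]
      nth_rewrite 2 [← hH.eq]
      exact posSemidef_self_mul_conjTranspose H
    set S : Matrix (Fin m ⊕ Fin n) (Fin m ⊕ Fin n) ℝ := fromBlocks hA.sqrt 0 0 hB.sqrt with hSdef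
    have hSpsd : S.PosSemidef := fromBlocks_diag_posSemidef hA.posSemidef_sqrt hB.posSemidef_sqrt
    have hSsq : S ^ 2 = H ^ 2 := by
      rw [pow_two, pow_two, hSdef, hHdef, fromBlocks_multiply, fromBlocks_multiply]
      simp [hA.sqrt_mul_self, hB.sqrt_mul_self]
    have hSeq : S = hH2.sqrt := hSpsd.eq_sqrt_of_sq_eq hH2 hSsq
    have hfb : fromBlocks hA.sqrt U Uᵀ hB.sqrt = S + H := by
      rw [hSdef, hHdef, fromBlocks_add]
      simp
    rw [hfb, hSeq]
    exact sqrt_sq_add_posSemidef (H := H) hH hH2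
end

section
/- Let V be a real symmetric m×m matrix, W a real symmetric n×n matrix, U a real m×n matrix, and q a natural number. If the (m+n)×(m+n) block matrix [[V, U], [Uᵀ, W]] is positive semidefinite and rank(V) + rank(W) ≤ 2q, then rank(U) ≤ q. -/
open Matrix

lemma rank_le_of_ker_le' {a b c : ℕ} (A : Matrix (Fin a) (Fin c) ℝ)
    (B : Matrix (Fin b) (Fin c) ℝ)
    (h : ∀ x, A.mulVec x = 0 → B.mulVec x = 0) : B.rank ≤ A.rank := by
  have hker : LinearMap.ker A.mulVecLin ≤ LinearMap.ker B.mulVecLin := fun x hx => h x hx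
  have h1 := A.mulVecLin.finrank_range_add_finrank_ker
  have h2 := B.mulVecLin.finrank_range_add_finrank_ker
  have h3 := Submodule.finrank_mono hker
  rw [Module.finrank_fintype_fun_eq_card, Fintype.card_fin] at h1 h2
  rw [Matrix.rank, Matrix.rank]
  omega

/-- If the block matrix `[[V, U], [Uᵀ, W]]` with real symmetric diagonal blocks `V`, `W`
is positive semidefinite and `rank V + rank W ≤ 2q`, then `rank U ≤ q`. -/
theorem rank_offdiag_le_of_block_psd
    (m n q : ℕ)
    (V : Matrix (Fin m) (Fin m) ℝ) (hV : V.IsSymm)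
    (W : Matrix (Fin n) (Fin n) ℝ) (hW : W.IsSymm)
    (U : Matrix (Fin m) (Fin n) ℝ)
    (hblock : (Matrix.fromBlocks V U Uᵀ W).PosSemidef)
    (hrank : V.rank + W.rank ≤ 2 * q) :
    U.rank ≤ q := by
  set M := Matrix.fromBlocks V U Uᵀ W with hM
  -- ker V ≤ ker Uᵀ
  have hVU : ∀ x : Fin m → ℝ, V.mulVec x = 0 → Uᵀ.mulVec x = 0 := by
    intro x hx
    set z : (Fin m ⊕ Fin n) → ℝ := Sum.elim x 0 with hz
    have hMz : M.mulVec z = Sum.elim (0 : Fin m → ℝ) (Uᵀ.mulVec x) := by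
      rw [hM, hz, Matrix.fromBlocks_mulVec]
      simp [hx]
    have hdot : star z ⬝ᵥ M.mulVec z = 0 := by
      rw [hMz, hz]
      simp [dotProduct, Fintype.sum_sum_type]
    have := (hblock.dotProduct_mulVec_zero_iff z).mp hdot
    rw [hMz] at this
    have := congrArg (fun f => f ∘ Sum.inr) this
    funext i
    exact congrFun this i
  -- ker W ≤ ker U
  have hWU : ∀ y : Fin n → ℝ, W.mulVec y = 0 → U.mulVec y = 0 := by
    intro y hy
    set z : (Fin m ⊕ Fin n) → ℝ := Sum.elim (0 : Fin m → ℝ) y with hz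
    have hMz : M.mulVec z = Sum.elim (U.mulVec y) (0 : Fin n → ℝ) := by
      rw [hM, hz, Matrix.fromBlocks_mulVec]
      simp [hy]
    have hdot : star z ⬝ᵥ M.mulVec z = 0 := by
      rw [hMz, hz]
      simp [dotProduct, Fintype.sum_sum_type]
    have := (hblock.dotProduct_mulVec_zero_iff z).mp hdot
    rw [hMz] at this
    have := congrArg (fun f => f ∘ Sum.inl) this
    funext i
    exact congrFun this i
  have h1 : Uᵀ.rank ≤ V.rank := rank_le_of_ker_le' V Uᵀ hVU
  have h2 : U.rank ≤ W.rank := rank_le_of_ker_le' W U hWU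
  have h3 : U.rank = Uᵀ.rank := (Matrix.rank_transpose U).symm
  omega
end

section
/- Let A be a real symmetric positive definite 4×4 matrix, let Z be a real 4×4 matrix, let S be a real symmetric 4×4 matrix such that S - Zᵀ A Z is positive semidefinite, and let q be a natural number. If rank(S) + 4 ≤ 2q, then rank(Z) ≤ q. -/
open Matrix

lemma rank_le_of_ker_le {n : ℕ} (M N : Matrix (Fin n) (Fin n) ℝ)
    (h : LinearMap.ker N.mulVecLin ≤ LinearMap.ker M.mulVecLin) :
    M.rank ≤ N.rank := by
  have hM := LinearMap.finrank_range_add_finrank_ker M.mulVecLin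
  have hN := LinearMap.finrank_range_add_finrank_ker N.mulVecLin
  have hk := Submodule.finrank_mono h
  simp only [Module.finrank_pi] at hM hN
  unfold Matrix.rank
  omega

/-- For `4 × 4` real matrices: if `A` is symmetric positive definite, `S` is symmetric
with `S - Zᵀ A Z ⪰ 0`, and `rank S + 4 ≤ 2q`, then `rank Z ≤ q`. -/
theorem rank_Z_le_of_dual_rank
    (A : Matrix (Fin 4) (Fin 4) ℝ) (hA : A.PosDef)
    (Z : Matrix (Fin 4) (Fin 4) ℝ)
    (S : Matrix (Fin 4) (Fin 4) ℝ) (hS : S.IsSymm)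
    (hpsd : (S - Zᵀ * A * Z).PosSemidef)
    (q : ℕ) (hrank : S.rank + 4 ≤ 2 * q) :
    Z.rank ≤ q := by
  have hZ4 : Z.rank ≤ 4 := Z.rank_le_card_width.trans (by simp)
  rcases le_or_gt 4 q with hq | hq
  · omega
  -- key: rank Z ≤ rank S
  have key : Z.rank ≤ S.rank := by
    apply rank_le_of_ker_le
    intro x hx
    rw [LinearMap.mem_ker, mulVecLin_apply] at hx ⊢
    -- S x = 0, show Z x = 0
    have h1 := hpsd.dotProduct_mulVec_nonneg x
    have hstar : star x = x := by simp
    rw [hstar, sub_mulVec, dotProduct_sub, hx, dotProduct_zero] at h1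
    have h2 : x ⬝ᵥ (Zᵀ * A * Z) *ᵥ x = (Z *ᵥ x) ⬝ᵥ A *ᵥ (Z *ᵥ x) := by
      rw [← mulVec_mulVec, ← mulVec_mulVec, mulVec_transpose, dotProduct_comm,
        ← dotProduct_mulVec, dotProduct_comm]
    rw [h2] at h1
    by_contra hne
    have := hA.dotProduct_mulVec_pos hne
    rw [show star (Z *ᵥ x) = Z *ᵥ x by simp] at this
    linarith
  omega
end
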